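/- arXiv:1404.2673 — 6 statements merged into one kernel-verified Lean document; each statement's English description precedes it below -/
import Mathlib

section
/- Let n ≥ 2 be an integer, R > 0, and let F : ℝⁿ → ℝ be symmetric and twice continuously differentiable near the point κ_R ∈ ℝⁿ whose first n−1 coordinates equal 1/R and whose last coordinate is 0. Let c, e, q ∈ ℝ and define φ : ℝ → ℝ by φ(s) = F(y(s)), where y(s) ∈ ℝⁿ has its first n−1 coordinates equal to 1/((R+sc)·√(1+(se)²)) and its last coordinate equal to −sq/(1+(se)²)^{3/2}. Then φ''(0) = (n−1)·(∂²F/∂x₁²(κ_R) + (n−2)·∂²F/∂x₁∂x₂(κ_R))·c²/R⁴ + 2(n−1)·∂²F/∂x₁∂xₙ(κ_R)·cq/R² + ∂²F/∂xₙ²(κ_R)·q² + (n−1)·∂F/∂x₁(κ_R)·(2c²/R³ − e²/R). -/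
open Real Filter

lemma single_comp_perm {n : ℕ} (σ : Equiv.Perm (Fin n)) (u : Fin n) :
    (Pi.single u (1:ℝ)) ∘ σ = Pi.single (σ.symm u) 1 := by
  funext j
  simp only [Function.comp_apply, Pi.single_apply, Equiv.apply_eq_iff_eq_symm_apply]

lemma kappa_comp_swap {n : ℕ} (κR : Fin n → ℝ) (a b : Fin n) (hab : κR a = κR b) :
    κR ∘ (Equiv.swap a b) = κR := by
  funext j
  rcases eq_or_ne j a with rfl | ha
  · show κR (Equiv.swap j b j) = κR j
    rw [Equiv.swap_apply_left]
    exact hab.symm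
  rcases eq_or_ne j b with rfl | hb
  · show κR (Equiv.swap a j j) = κR j
    rw [Equiv.swap_apply_right]
    exact hab
  · show κR (Equiv.swap a b j) = κR j
    rw [Equiv.swap_apply_of_ne_of_ne ha hb]

lemma aux_a (R c e : ℝ) (hR : 0 < R) :
    ∃ A : ℝ → ℝ,
      (∀ᶠ s in nhds (0:ℝ), HasDerivAt
        (fun s => 1 / ((R + s * c) * Real.sqrt (1 + (s * e) ^ 2))) (A s) s)
      ∧ A 0 = -(c / R ^ 2) ∧ HasDerivAt A (2 * c ^ 2 / R ^ 3 - e ^ 2 / R) 0 := by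
  have hu : ∀ s : ℝ, (0:ℝ) < 1 + (s * e) ^ 2 := fun s => by positivity
  have hS : ∀ s : ℝ, (0:ℝ) < Real.sqrt (1 + (s * e) ^ 2) := fun s => Real.sqrt_pos.2 (hu s)
  have hud : ∀ s : ℝ, HasDerivAt (fun s : ℝ => 1 + (s * e) ^ 2) (2 * (s * e) * e) s := by
    intro s
    have h1 : HasDerivAt (fun s : ℝ => s * e) e s := hasDerivAt_mul_const e
    have := (h1.pow 2).const_add 1
    refine this.congr_deriv (Eq.symm ?_)
    push_cast; ring
  have hSd : ∀ s : ℝ, HasDerivAt (fun s : ℝ => Real.sqrt (1 + (s * e) ^ 2))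
      (s * e ^ 2 / Real.sqrt (1 + (s * e) ^ 2)) s := by
    intro s
    have := (hud s).sqrt (hu s).ne'
    convert this using 1
    rw [eq_div_iff (by positivity : (2:ℝ) * Real.sqrt (1 + (s*e)^2) ≠ 0)]
    field_simp [(hS s).ne']
  have hPd : ∀ s : ℝ, HasDerivAt (fun s : ℝ => R + s * c) c s := fun s =>
    (hasDerivAt_mul_const c).const_add R
  refine ⟨fun s => -((c * Real.sqrt (1 + (s * e) ^ 2)
      + (R + s * c) * (s * e ^ 2 / Real.sqrt (1 + (s * e) ^ 2)))
      / ((R + s * c) * Real.sqrt (1 + (s * e) ^ 2)) ^ 2), ?_, ?_, ?_⟩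
  · have hct : Continuous (fun s : ℝ => R + s * c) := by continuity
    have ht : Filter.Tendsto (fun s : ℝ => R + s * c) (nhds 0) (nhds R) := by
      have := hct.continuousAt (x := 0)
      unfold ContinuousAt at this
      simpa using this
    filter_upwards [ht.eventually (eventually_gt_nhds hR)] with s hs
    have hne : (R + s * c) * Real.sqrt (1 + (s * e) ^ 2) ≠ 0 := by positivity
    simp only [one_div]
    refine (((hPd s).mul (hSd s)).inv hne).congr_deriv (Eq.symm ?_)
    simp only [Pi.mul_apply]
    ring
  · norm_num [Real.sqrt_one, neg_div]
  · have hS0 : HasDerivAt (fun s : ℝ => Real.sqrt (1 + (s * e) ^ 2)) 0 0 := by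
      have := hSd 0
      convert this using 1
      norm_num
    have hq : HasDerivAt (fun s : ℝ => s * e ^ 2 / Real.sqrt (1 + (s * e) ^ 2)) (e ^ 2) 0 := by
      have h1 : HasDerivAt (fun s : ℝ => s * e ^ 2) (e ^ 2) 0 := hasDerivAt_mul_const (e ^ 2)
      have := h1.div hS0 (hS 0).ne'
      refine this.congr_deriv (Eq.symm ?_)
      norm_num [Real.sqrt_one]
    have hnum : HasDerivAt (fun s : ℝ => c * Real.sqrt (1 + (s * e) ^ 2)
        + (R + s * c) * (s * e ^ 2 / Real.sqrt (1 + (s * e) ^ 2)))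
        (c * 0 + (c * (0 * e ^ 2 / Real.sqrt (1 + (0 * e) ^ 2)) + (R + 0 * c) * e ^ 2)) 0 :=
      (hS0.const_mul c).add ((hPd 0).mul hq)
    have hden : HasDerivAt (fun s : ℝ => ((R + s * c) * Real.sqrt (1 + (s * e) ^ 2)) ^ 2)
        ((2:ℕ) * ((R + 0 * c) * Real.sqrt (1 + (0 * e) ^ 2)) ^ (2 - 1)
          * (c * Real.sqrt (1 + (0 * e) ^ 2) + (R + 0 * c) * 0)) 0 :=
      ((hPd 0).mul hS0).pow 2
    have hden0 : ((R + 0 * c) * Real.sqrt (1 + (0 * e) ^ 2)) ^ 2 ≠ 0 := by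
      norm_num [Real.sqrt_one, hR.ne']
    have := ((hnum.div hden hden0)).neg
    refine this.congr_deriv (Eq.symm ?_)
    norm_num [Real.sqrt_one]
    field_simp
    ring

lemma aux_b (q e : ℝ) :
    ∃ B : ℝ → ℝ,
      (∀ s : ℝ, HasDerivAt
        (fun s : ℝ => -(s * q) / (1 + (s * e) ^ 2) ^ ((3:ℝ)/2)) (B s) s)
      ∧ B 0 = -q ∧ HasDerivAt B 0 0 := by
  have hu : ∀ s : ℝ, (0:ℝ) < 1 + (s * e) ^ 2 := fun s => by positivity
  have hud : ∀ s : ℝ, HasDerivAt (fun s : ℝ => 1 + (s * e) ^ 2) (2 * (s * e) * e) s := by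
    intro s
    have h1 : HasDerivAt (fun s : ℝ => s * e) e s := hasDerivAt_mul_const e
    have := (h1.pow 2).const_add 1
    refine this.congr_deriv (Eq.symm ?_)
    push_cast; ring
  have h12 : ∀ s : ℝ, (1 + (s * e) ^ 2) ^ ((3:ℝ)/2 - 1) = Real.sqrt (1 + (s * e) ^ 2) := by
    intro s
    rw [show (3:ℝ)/2 - 1 = (1/2 : ℝ) by norm_num, ← Real.sqrt_eq_rpow]
  have hg : ∀ s : ℝ, HasDerivAt (fun s : ℝ => (1 + (s * e) ^ 2) ^ ((3:ℝ)/2))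
      (2 * (s * e) * e * ((3:ℝ)/2) * (1 + (s * e) ^ 2) ^ ((3:ℝ)/2 - 1)) s := fun s =>
    (hud s).rpow_const (Or.inl (hu s).ne')
  have hg0 : ∀ s : ℝ, ((1 + (s * e) ^ 2) ^ ((3:ℝ)/2)) ≠ 0 := fun s => by
    have := hu s; positivity
  refine ⟨fun s => (-(q * (1 + (s * e) ^ 2) ^ ((3:ℝ)/2))
      + 3 * s ^ 2 * q * e ^ 2 * Real.sqrt (1 + (s * e) ^ 2))
      / ((1 + (s * e) ^ 2) ^ ((3:ℝ)/2)) ^ 2, ?_, ?_, ?_⟩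
  · intro s
    have hf : HasDerivAt (fun s : ℝ => -(s * q)) (-q) s := (hasDerivAt_mul_const q).neg
    have := hf.div (hg s) (hg0 s)
    refine this.congr_deriv (Eq.symm ?_)
    rw [h12]
    ring
  · norm_num [Real.one_rpow]
  · have hS0 : HasDerivAt (fun s : ℝ => Real.sqrt (1 + (s * e) ^ 2)) 0 0 := by
      have := (hud 0).sqrt (hu 0).ne'
      convert this using 1
      norm_num
    have hp : HasDerivAt (fun s : ℝ => 3 * s ^ 2 * q * e ^ 2)
        (3 * (↑2 * 0 ^ (2-1)) * q * e ^ 2) 0 :=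
      (((hasDerivAt_pow 2 0).const_mul 3).mul_const q).mul_const (e ^ 2)
    have hN : HasDerivAt (fun s : ℝ => -(q * (1 + (s * e) ^ 2) ^ ((3:ℝ)/2))
        + 3 * s ^ 2 * q * e ^ 2 * Real.sqrt (1 + (s * e) ^ 2))
        (-(q * (2 * (0 * e) * e * ((3:ℝ)/2) * (1 + (0 * e) ^ 2) ^ ((3:ℝ)/2 - 1)))
          + (3 * (↑2 * 0 ^ (2-1)) * q * e ^ 2 * Real.sqrt (1 + (0 * e) ^ 2)
            + 3 * 0 ^ 2 * q * e ^ 2 * 0)) 0 :=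
      (((hg 0).const_mul q).neg).add (hp.mul hS0)
    have hD : HasDerivAt (fun s : ℝ => ((1 + (s * e) ^ 2) ^ ((3:ℝ)/2)) ^ 2)
        ((2:ℕ) * ((1 + (0 * e) ^ 2) ^ ((3:ℝ)/2)) ^ (2-1)
          * (2 * (0 * e) * e * ((3:ℝ)/2) * (1 + (0 * e) ^ 2) ^ ((3:ℝ)/2 - 1))) 0 :=
      (hg 0).pow 2
    have hD0 : ((1 + (0 * e) ^ 2) ^ ((3:ℝ)/2)) ^ 2 ≠ 0 := by
      norm_num [Real.one_rpow]
    have := hN.div hD hD0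
    refine this.congr_deriv (Eq.symm ?_)
    norm_num

lemma aux_chain {E : Type*} [NormedAddCommGroup E] [NormedSpace ℝ E]
    (F : E → ℝ) (x₀ : E) (hF : ContDiffAt ℝ 2 F x₀)
    (y y1 : ℝ → E) (v2 : E)
    (hy0 : y 0 = x₀)
    (hy : ∀ᶠ s in nhds (0:ℝ), HasDerivAt y (y1 s) s)
    (hy1 : HasDerivAt y1 v2 0) :
    iteratedDeriv 2 (fun s => F (y s)) 0
      = fderiv ℝ (fderiv ℝ F) x₀ (y1 0) (y1 0) + fderiv ℝ F x₀ v2 := by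
  have hFd : ∀ᶠ x in nhds x₀, DifferentiableAt ℝ F x := by
    filter_upwards [hF.eventually (by norm_num)] with x hx
    exact hx.differentiableAt two_ne_zero
  have hy00 : HasDerivAt y (y1 0) 0 := hy.self_of_nhds
  have hyF : ∀ᶠ s in nhds (0:ℝ), DifferentiableAt ℝ F (y s) := by
    have : Filter.Tendsto y (nhds 0) (nhds x₀) := hy0 ▸ hy00.continuousAt
    exact this.eventually hFd
  have hderiv : deriv (fun s => F (y s)) =ᶠ[nhds (0:ℝ)] fun s => fderiv ℝ F (y s) (y1 s) := by
    filter_upwards [hy, hyF] with s h1 h2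
    exact (h2.hasFDerivAt.comp_hasDerivAt s h1).deriv
  have h2d : DifferentiableAt ℝ (fderiv ℝ F) x₀ :=
    (hF.fderiv_right (m := 1) (by norm_num)).differentiableAt one_ne_zero
  have hG : HasDerivAt (fun s => fderiv ℝ F (y s)) (fderiv ℝ (fderiv ℝ F) x₀ (y1 0)) 0 := by
    have h := h2d.hasFDerivAt
    rw [← hy0] at h
    have h2 := h.comp_hasDerivAt 0 hy00
    rw [hy0] at h2
    exact h2
  have hfinal : HasDerivAt (fun s => fderiv ℝ F (y s) (y1 s))
      (fderiv ℝ (fderiv ℝ F) x₀ (y1 0) (y1 0) + fderiv ℝ F (y 0) v2) 0 :=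
    hG.clm_apply hy1
  rw [iteratedDeriv_succ, iteratedDeriv_one, hderiv.deriv_eq, hfinal.deriv, hy0]

lemma aux_apply {E : Type*} [NormedAddCommGroup E] [NormedSpace ℝ E]
    (F : E → ℝ) (x₀ : E) (h : DifferentiableAt ℝ (fderiv ℝ F) x₀) (u v : E) :
    fderiv ℝ (fun x => fderiv ℝ F x v) x₀ u = fderiv ℝ (fderiv ℝ F) x₀ u v := by
  have h1 : HasFDerivAt (fun x => fderiv ℝ F x v)
      ((ContinuousLinearMap.apply ℝ ℝ v).comp (fderiv ℝ (fderiv ℝ F) x₀)) x₀ :=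
    (ContinuousLinearMap.apply ℝ ℝ v).hasFDerivAt.comp x₀ h.hasFDerivAt
  rw [h1.fderiv]
  rfl

lemma aux_sym {n : ℕ} (F : (Fin n → ℝ) → ℝ)
    (hsym : ∀ σ : Equiv.Perm (Fin n), ∀ x : Fin n → ℝ, F (x ∘ σ) = F x)
    (κR : Fin n → ℝ) (σ : Equiv.Perm (Fin n)) (hσκ : κR ∘ σ = κR) :
    (∀ v : Fin n → ℝ, fderiv ℝ F κR v = fderiv ℝ F κR (v ∘ σ)) ∧
    (∀ u v : Fin n → ℝ, fderiv ℝ (fun x => fderiv ℝ F x v) κR u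
      = fderiv ℝ (fun x => fderiv ℝ F x (v ∘ σ)) κR (u ∘ σ)) := by
  set T : (Fin n → ℝ) ≃L[ℝ] (Fin n → ℝ) :=
    (LinearEquiv.funCongrLeft ℝ ℝ σ).toContinuousLinearEquiv with hT
  have hTapp : ∀ x : Fin n → ℝ, T x = x ∘ σ := fun x => rfl
  have hFT : F ∘ T = F := by
    funext x
    show F (T x) = F x
    rw [hTapp]
    exact hsym σ x
  have hTκ : T κR = κR := by rw [hTapp]; exact hσκ
  have hg : ∀ x, fderiv ℝ F x = (fderiv ℝ F (T x)).comp (T : (Fin n → ℝ) →L[ℝ] (Fin n → ℝ)) := by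
    intro x
    conv_lhs => rw [← hFT]
    exact T.comp_right_fderiv
  constructor
  · intro v
    conv_lhs => rw [hg κR, hTκ]
    rfl
  · intro u v
    have hfun : (fun x => fderiv ℝ F x v) = (fun z => fderiv ℝ F z (v ∘ σ)) ∘ T := by
      funext x
      show _ = fderiv ℝ F (T x) (v ∘ σ)
      rw [hg x]
      rfl
    rw [hfun, T.comp_right_fderiv, hTκ]
    rfl

set_option maxHeartbeats 1000000 in
/-- Second variation of the speed `F(κ_u)` at a cylinder of radius `R > 0`:
for symmetric `F`, twice continuously differentiable near `κ_R = (1/R, …, 1/R, 0)`,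
and the curve `y(s)` with first `n−1` coordinates `1/((R+sc)√(1+(se)²))` and last
coordinate `−sq/(1+(se)²)^{3/2}`, the function `φ(s) = F(y(s))` satisfies
`φ''(0) = (n−1)(∂²F/∂x₁² + (n−2)∂²F/∂x₁∂x₂)(κ_R) c²/R⁴
          + 2(n−1)∂²F/∂x₁∂xₙ(κ_R) cq/R² + ∂²F/∂xₙ²(κ_R) q²
          + (n−1)∂F/∂x₁(κ_R)(2c²/R³ − e²/R)`. -/
theorem stmt_10 (n : ℕ) (hn : 2 ≤ n) (R : ℝ) (hR : 0 < R) (F : (Fin n → ℝ) → ℝ)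
    (hsym : ∀ σ : Equiv.Perm (Fin n), ∀ x : Fin n → ℝ, F (x ∘ σ) = F x)
    (κR : Fin n → ℝ)
    (hκR : ∀ i : Fin n, κR i = if (i : ℕ) < n - 1 then 1 / R else 0)
    (hF : ContDiffAt ℝ 2 F κR)
    (c e q : ℝ) (y : ℝ → Fin n → ℝ)
    (hy : ∀ s : ℝ, ∀ i : Fin n, y s i =
      if (i : ℕ) < n - 1 then 1 / ((R + s * c) * Real.sqrt (1 + (s * e) ^ 2))
      else -(s * q) / (1 + (s * e) ^ 2) ^ ((3 : ℝ) / 2)) :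
    iteratedDeriv 2 (fun s : ℝ => F (y s)) 0
      = ((n : ℝ) - 1) *
          (fderiv ℝ (fun x => fderiv ℝ F x (Pi.single (⟨0, by omega⟩ : Fin n) 1)) κR
              (Pi.single (⟨0, by omega⟩ : Fin n) 1)
            + ((n : ℝ) - 2) *
              fderiv ℝ (fun x => fderiv ℝ F x (Pi.single (⟨1, by omega⟩ : Fin n) 1)) κR
                (Pi.single (⟨0, by omega⟩ : Fin n) 1)) * c ^ 2 / R ^ 4
        + 2 * ((n : ℝ) - 1) *
            fderiv ℝ (fun x => fderiv ℝ F x (Pi.single (⟨n - 1, by omega⟩ : Fin n) 1)) κR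
              (Pi.single (⟨0, by omega⟩ : Fin n) 1) * c * q / R ^ 2
        + fderiv ℝ (fun x => fderiv ℝ F x (Pi.single (⟨n - 1, by omega⟩ : Fin n) 1)) κR
            (Pi.single (⟨n - 1, by omega⟩ : Fin n) 1) * q ^ 2
        + ((n : ℝ) - 1) * fderiv ℝ F κR (Pi.single (⟨0, by omega⟩ : Fin n) 1) *
            (2 * c ^ 2 / R ^ 3 - e ^ 2 / R) := by
  set Z : Fin n := ⟨0, by omega⟩ with hZdef
  set O : Fin n := ⟨1, by omega⟩ with hOdef
  set N1 : Fin n := ⟨n - 1, by omega⟩ with hN1def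
  set χ : Fin n → ℝ := fun i => if (i : ℕ) < n - 1 then 1 else 0 with hχdef
  set w : Fin n → ℝ := Pi.single N1 1 with hwdef
  set S : Finset (Fin n) := Finset.univ.filter (fun i : Fin n => (i : ℕ) < n - 1) with hSdef
  set H := fderiv ℝ (fderiv ℝ F) κR with hHdef
  set f1 := fderiv ℝ F κR with hf1def
  have hZlt : (Z : ℕ) < n - 1 := by show 0 < n - 1; omega
  have h2d : DifferentiableAt ℝ (fderiv ℝ F) κR :=
    (hF.fderiv_right (m := 1) (by norm_num)).differentiableAt one_ne_zero
  have hDH : ∀ u v : Fin n → ℝ, fderiv ℝ (fun x => fderiv ℝ F x v) κR u = H u v :=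
    fun u v => aux_apply F κR h2d u v
  have hκlt : ∀ i : Fin n, (i : ℕ) < n - 1 → κR i = 1 / R := fun i hi => by
    rw [hκR i, if_pos hi]
  have hswapκ : ∀ a b : Fin n, (a : ℕ) < n - 1 → (b : ℕ) < n - 1 →
      κR ∘ Equiv.swap a b = κR := fun a b ha hb =>
    kappa_comp_swap κR a b (by rw [hκlt a ha, hκlt b hb])
  have hsw1 : ∀ a b : Fin n, κR ∘ Equiv.swap a b = κR → ∀ u : Fin n,
      f1 (Pi.single u 1) = f1 (Pi.single (Equiv.swap a b u) 1) := by
    intro a b hab u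
    have h := (aux_sym F hsym κR (Equiv.swap a b) hab).1 (Pi.single u 1)
    rw [single_comp_perm, Equiv.symm_swap] at h
    exact h
  have hsw2 : ∀ a b : Fin n, κR ∘ Equiv.swap a b = κR → ∀ u v : Fin n,
      H (Pi.single u 1) (Pi.single v 1)
        = H (Pi.single (Equiv.swap a b u) 1) (Pi.single (Equiv.swap a b v) 1) := by
    intro a b hab u v
    have h := (aux_sym F hsym κR (Equiv.swap a b) hab).2 (Pi.single u 1) (Pi.single v 1)
    rw [single_comp_perm, single_comp_perm, Equiv.symm_swap] at h
    rw [← hDH, ← hDH]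
    exact h
  have key_f : ∀ i : Fin n, (i : ℕ) < n - 1 → f1 (Pi.single i 1) = f1 (Pi.single Z 1) := by
    intro i hi
    have h := hsw1 i Z (hswapκ i Z hi hZlt) i
    rwa [Equiv.swap_apply_left] at h
  have key_dd : ∀ i : Fin n, (i : ℕ) < n - 1 →
      H (Pi.single i 1) (Pi.single i 1) = H (Pi.single Z 1) (Pi.single Z 1) := by
    intro i hi
    have h := hsw2 i Z (hswapκ i Z hi hZlt) i i
    rwa [Equiv.swap_apply_left] at h
  have hN1ne : ∀ i : Fin n, (i : ℕ) < n - 1 → N1 ≠ i := fun i hi =>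
    Fin.ne_of_val_ne (by show n - 1 ≠ (i : ℕ); omega)
  have key_dw : ∀ i : Fin n, (i : ℕ) < n - 1 →
      H (Pi.single i 1) w = H (Pi.single Z 1) w := by
    intro i hi
    have h := hsw2 i Z (hswapκ i Z hi hZlt) i N1
    rwa [Equiv.swap_apply_left,
      Equiv.swap_apply_of_ne_of_ne (hN1ne i hi) (hN1ne Z hZlt)] at h
  have key_off : ∀ i j : Fin n, (i : ℕ) < n - 1 → (j : ℕ) < n - 1 → i ≠ j →
      H (Pi.single i 1) (Pi.single j 1) = H (Pi.single Z 1) (Pi.single O 1) := by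
    intro i j hi hj hij
    have hvij : (i : ℕ) ≠ (j : ℕ) := fun h => hij (Fin.ext h)
    have hOlt : (O : ℕ) < n - 1 := by show 1 < n - 1; omega
    have h1 := hsw2 i Z (hswapκ i Z hi hZlt) i j
    rw [Equiv.swap_apply_left] at h1
    have hj1Z : Equiv.swap i Z j ≠ Z := by
      conv_rhs => rw [← Equiv.swap_apply_left i Z]
      exact (Equiv.swap i Z).injective.ne (Ne.symm hij)
    have hj1lt : ((Equiv.swap i Z j : Fin n) : ℕ) < n - 1 := by
      have h' : Equiv.swap i Z j = if j = i then Z else if j = Z then i else j := by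
        rw [Equiv.swap_apply_def]
      split_ifs at h' <;> rw [h']
      · exact hZlt
      · exact hi
      · exact hj
    have hZO : Z ≠ O := Fin.ne_of_val_ne (by show (0:ℕ) ≠ 1; omega)
    have h2 := hsw2 (Equiv.swap i Z j) O (hswapκ _ O hj1lt hOlt) Z (Equiv.swap i Z j)
    rw [Equiv.swap_apply_of_ne_of_ne (Ne.symm hj1Z) hZO, Equiv.swap_apply_left] at h2
    exact h1.trans h2
  -- cardinality and sums
  have hmem : ∀ i : Fin n, i ∈ S → (i : ℕ) < n - 1 := fun i hi =>
    (Finset.mem_filter.mp hi).2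
  have hScard : S.card = n - 1 := by
    have hSe : S = Finset.univ.erase N1 := by
      ext i
      simp only [hSdef, Finset.mem_filter, Finset.mem_univ, true_and, Finset.mem_erase,
        and_true]
      constructor
      · intro h
        exact Fin.ne_of_val_ne (by show (i : ℕ) ≠ n - 1; omega)
      · intro h
        have h2 : (i : ℕ) ≠ n - 1 := fun hh => h (Fin.ext hh)
        have := i.isLt
        omega
    rw [hSe, Finset.card_erase_of_mem (Finset.mem_univ _), Finset.card_univ,
      Fintype.card_fin]
  have hχsum : χ = ∑ i ∈ S, Pi.single i (1:ℝ) := by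
    funext i
    rw [Finset.sum_apply]
    simp only [Pi.single_apply, Finset.sum_ite_eq]
    simp [hSdef, hχdef]
  have hf1χ : f1 χ = ((n - 1 : ℕ) : ℝ) * f1 (Pi.single Z 1) := by
    rw [hχsum, map_sum, Finset.sum_congr rfl (fun i hi => key_f i (hmem i hi)),
      Finset.sum_const, hScard, nsmul_eq_mul]
  have hHχw : H χ w = ((n - 1 : ℕ) : ℝ) * H (Pi.single Z 1) w := by
    rw [hχsum, map_sum, ContinuousLinearMap.sum_apply,
      Finset.sum_congr rfl (fun i hi => key_dw i (hmem i hi)),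
      Finset.sum_const, hScard, nsmul_eq_mul]
  have hSch : ∀ u v : Fin n → ℝ, H u v = H v u := fun u v =>
    hF.isSymmSndFDerivAt (by simp [minSmoothness_of_isRCLikeNormedField]) u v
  have hHχχ : H χ χ = ((n - 1 : ℕ) : ℝ) * (H (Pi.single Z 1) (Pi.single Z 1)
      + ((n - 2 : ℕ) : ℝ) * H (Pi.single Z 1) (Pi.single O 1)) := by
    have inner : ∀ i ∈ S, (∑ j ∈ S, H (Pi.single i 1) (Pi.single j 1))
        = H (Pi.single Z 1) (Pi.single Z 1)
          + ((n - 2 : ℕ) : ℝ) * H (Pi.single Z 1) (Pi.single O 1) := by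
      intro i hi
      rw [← Finset.add_sum_erase S _ hi, key_dd i (hmem i hi)]
      congr 1
      rw [Finset.sum_congr rfl (fun j hj => key_off i j (hmem i hi)
          (hmem j (Finset.mem_of_mem_erase hj)) (Ne.symm (Finset.ne_of_mem_erase hj))),
        Finset.sum_const, Finset.card_erase_of_mem hi, hScard, nsmul_eq_mul,
        show n - 1 - 1 = n - 2 from by omega]
    rw [hχsum]
    simp only [map_sum, ContinuousLinearMap.sum_apply]
    rw [Finset.sum_comm, Finset.sum_congr rfl inner, Finset.sum_const, hScard, nsmul_eq_mul]
  -- the curve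
  have hy0κ : y 0 = κR := by
    funext i
    rw [hy 0 i, hκR i]
    split_ifs with h
    · norm_num [Real.sqrt_one]
    · norm_num
  obtain ⟨A, hA1, hA0, hA2⟩ := aux_a R c e hR
  obtain ⟨B, hB1, hB0, hB2⟩ := aux_b q e
  have hyab : y = fun s => (1 / ((R + s * c) * Real.sqrt (1 + (s * e) ^ 2))) • χ
      + (-(s * q) / (1 + (s * e) ^ 2) ^ ((3:ℝ)/2)) • w := by
    funext s i
    rw [hy s i]
    simp only [Pi.add_apply, Pi.smul_apply, smul_eq_mul, hχdef, hwdef, Pi.single_apply]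
    by_cases hi : (i : ℕ) < n - 1
    · rw [if_pos hi, if_pos hi, if_neg (show i ≠ N1 from
        Fin.ne_of_val_ne (by show (i : ℕ) ≠ n - 1; omega))]
      ring
    · have hiN : i = N1 := Fin.ext (by show (i : ℕ) = n - 1; have := i.isLt; omega)
      rw [if_neg hi, if_neg hi, if_pos hiN]
      ring
  have hyd : ∀ᶠ s in nhds (0:ℝ), HasDerivAt y (A s • χ + B s • w) s := by
    rw [hyab]
    filter_upwards [hA1] with s hA
    exact (hA.smul_const χ).add ((hB1 s).smul_const w)
  have hy1d : HasDerivAt (fun s => A s • χ + B s • w)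
      ((2 * c ^ 2 / R ^ 3 - e ^ 2 / R) • χ) 0 := by
    have h := (hA2.smul_const χ).add (hB2.smul_const w)
    exact h.congr_deriv (by simp)
  have main := aux_chain F κR hF y (fun s => A s • χ + B s • w)
      ((2 * c ^ 2 / R ^ 3 - e ^ 2 / R) • χ) hy0κ hyd hy1d
  rw [← hHdef, ← hf1def] at main
  have hY10 : (fun s => A s • χ + B s • w) 0 = (-(c / R ^ 2)) • χ + (-q) • w := by
    show A 0 • χ + B 0 • w = _
    rw [hA0, hB0]
  rw [hA0, hB0] at main
  have expand : H ((-(c / R ^ 2)) • χ + (-q) • w) ((-(c / R ^ 2)) • χ + (-q) • w)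
      = (c / R ^ 2) * (c / R ^ 2) * H χ χ + (c / R ^ 2) * q * H χ w
        + q * (c / R ^ 2) * H w χ + q * q * H w w := by
    simp only [map_add, map_smul, ContinuousLinearMap.add_apply,
      ContinuousLinearMap.coe_smul', Pi.smul_apply, smul_eq_mul]
    ring
  have expand2 : f1 ((2 * c ^ 2 / R ^ 3 - e ^ 2 / R) • χ)
      = (2 * c ^ 2 / R ^ 3 - e ^ 2 / R) * f1 χ := by
    rw [map_smul]
    rfl
  rw [expand, expand2, hSch w χ, hHχχ, hHχw, hf1χ] at main
  rw [main]
  simp only [hDH]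
  have c1 : ((n - 1 : ℕ) : ℝ) = (n : ℝ) - 1 := by
    push_cast [Nat.cast_sub (by omega : 1 ≤ n)]
    ring
  have c2 : ((n - 2 : ℕ) : ℝ) = (n : ℝ) - 2 := by
    push_cast [Nat.cast_sub hn]
    ring
  rw [c1, c2]
  ring
end

section
/- Let n ≥ 2 and a be integers with 1 ≤ a ≤ n, and define q : ℝ³ → ℝ by q(x₁,x₂,x₃) = (1/a)·(C(n−1,a−1)·x₁^{n−a}·(1+x₂²)^{(2−a)/2} − C(n−1,a−2)·x₁^{n+1−a}·(1+x₂²)^{−a/2}·x₃), where the second summand is interpreted as 0 when a = 1 and C(m,k) is the binomial coefficient. Then for every three-times differentiable function u : ℝ → ℝ with u > 0 and every z ∈ ℝ, ∂q/∂x₁(u(z),u'(z),u''(z)) − (d/dz)[ z ↦ ∂q/∂x₂(u(z),u'(z),u''(z)) ] + (d²/dz²)[ z ↦ ∂q/∂x₃(u(z),u'(z),u''(z)) ] = C(n−1,a)·u(z)^{n−a−1}·(1+u'(z)²)^{−a/2} − C(n−1,a−1)·u(z)^{n−a}·u''(z)·(1+u'(z)²)^{−(a+2)/2}. -/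
/-- The `a`-th weighted-volume density
`q(x₁,x₂,x₃) = (1/a)(C(n−1,a−1) x₁^{n−a} (1+x₂²)^{(2−a)/2}
                − C(n−1,a−2) x₁^{n+1−a} (1+x₂²)^{−a/2} x₃)`,
the second summand interpreted as `0` when `a = 1`. -/
noncomputable def qdens (n a : ℕ) (x₁ x₂ x₃ : ℝ) : ℝ :=
  (1 / (a : ℝ)) *
    (((n - 1).choose (a - 1) : ℝ) * x₁ ^ (n - a) * (1 + x₂ ^ 2) ^ (((2 : ℝ) - (a : ℝ)) / 2)
      - (if a = 1 then 0
         else ((n - 1).choose (a - 2) : ℝ) * x₁ ^ (n + 1 - a) * (1 + x₂ ^ 2) ^ (-(a : ℝ) / 2) * x₃))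

/-- Partial derivative of `qdens` in the first variable. -/
lemma qd1 (n a : ℕ) (x₁ x₂ x₃ : ℝ) :
    HasDerivAt (fun t : ℝ => qdens n a t x₂ x₃)
      ((1 / (a : ℝ)) *
        (((n - 1).choose (a - 1) : ℝ) * ((n - a : ℕ) : ℝ) * x₁ ^ (n - a - 1) *
            (1 + x₂ ^ 2) ^ (((2 : ℝ) - (a : ℝ)) / 2)
          - (if a = 1 then (0:ℝ) else ((n - 1).choose (a - 2) : ℝ)) *
              (((n + 1 - a : ℕ) : ℝ) * x₁ ^ (n + 1 - a - 1) *
                (1 + x₂ ^ 2) ^ (-(a : ℝ) / 2) * x₃))) x₁ := by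
  unfold qdens
  split_ifs with h
  · have h3 := ((((hasDerivAt_pow (n - a) x₁).const_mul
      (((n - 1).choose (a - 1) : ℝ))).mul_const
      ((1 + x₂ ^ 2) ^ (((2 : ℝ) - (a : ℝ)) / 2))).sub_const 0).const_mul (1 / (a : ℝ))
    refine h3.congr_deriv ?_
    ring
  · have h1 := ((hasDerivAt_pow (n - a) x₁).const_mul
      (((n - 1).choose (a - 1) : ℝ))).mul_const
      ((1 + x₂ ^ 2) ^ (((2 : ℝ) - (a : ℝ)) / 2))
    have h2 := (((hasDerivAt_pow (n + 1 - a) x₁).const_mul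
      (((n - 1).choose (a - 2) : ℝ))).mul_const
      ((1 + x₂ ^ 2) ^ (-(a : ℝ) / 2))).mul_const x₃
    have h3 := (h1.sub h2).const_mul (1 / (a : ℝ))
    refine h3.congr_deriv ?_
    ring

/-- Partial derivative of `qdens` in the second variable. -/
lemma qd2 (n a : ℕ) (x₁ x₂ x₃ : ℝ) :
    HasDerivAt (fun t : ℝ => qdens n a x₁ t x₃)
      ((1 / (a : ℝ)) *
        (((n - 1).choose (a - 1) : ℝ) * ((2 : ℝ) - (a : ℝ)) *
            (x₁ ^ (n - a) * x₂ * (1 + x₂ ^ 2) ^ (-(a : ℝ) / 2))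
          + (a : ℝ) * (if a = 1 then (0:ℝ) else ((n - 1).choose (a - 2) : ℝ)) *
              (x₁ ^ (n + 1 - a) * x₂ * x₃ * (1 + x₂ ^ 2) ^ (-((a : ℝ) + 2) / 2)))) x₂ := by
  have hb : HasDerivAt (fun t : ℝ => 1 + t ^ 2) ((2 : ℕ) * x₂ ^ 1) x₂ :=
    (hasDerivAt_pow 2 x₂).const_add 1
  have hne : (1 : ℝ) + x₂ ^ 2 ≠ 0 := by positivity
  unfold qdens
  split_ifs with h
  · have h3 := (((hb.rpow_const (p := ((2 : ℝ) - (a : ℝ)) / 2) (Or.inl hne)).const_mul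
      (((n - 1).choose (a - 1) : ℝ) * x₁ ^ (n - a))).sub_const 0).const_mul (1 / (a : ℝ))
    refine h3.congr_deriv ?_
    rw [show ((2 : ℝ) - (a : ℝ)) / 2 - 1 = -(a : ℝ) / 2 from by ring]
    ring
  · have h1 := (hb.rpow_const (p := ((2 : ℝ) - (a : ℝ)) / 2) (Or.inl hne)).const_mul
      (((n - 1).choose (a - 1) : ℝ) * x₁ ^ (n - a))
    have h2 := ((hb.rpow_const (p := -(a : ℝ) / 2) (Or.inl hne)).const_mul
      (((n - 1).choose (a - 2) : ℝ) * x₁ ^ (n + 1 - a))).mul_const x₃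
    have h3 := (h1.sub h2).const_mul (1 / (a : ℝ))
    refine h3.congr_deriv ?_
    rw [show ((2 : ℝ) - (a : ℝ)) / 2 - 1 = -(a : ℝ) / 2 from by ring,
      show -(a : ℝ) / 2 - 1 = -((a : ℝ) + 2) / 2 from by ring]
    ring

/-- Partial derivative of `qdens` in the third variable. -/
lemma qd3 (n a : ℕ) (x₁ x₂ x₃ : ℝ) :
    HasDerivAt (fun t : ℝ => qdens n a x₁ x₂ t)
      (-((1 / (a : ℝ)) * (if a = 1 then (0:ℝ) else ((n - 1).choose (a - 2) : ℝ)) *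
          (x₁ ^ (n + 1 - a) * (1 + x₂ ^ 2) ^ (-(a : ℝ) / 2)))) x₃ := by
  unfold qdens
  split_ifs with h
  · have h3 := hasDerivAt_const x₃
      ((1 / (a : ℝ)) *
        (((n - 1).choose (a - 1) : ℝ) * x₁ ^ (n - a) * (1 + x₂ ^ 2) ^ (((2 : ℝ) - (a : ℝ)) / 2)
          - 0))
    refine h3.congr_deriv ?_
    ring
  · have h3 := (((hasDerivAt_id' (𝕜 := ℝ) x₃).const_mul
      (((n - 1).choose (a - 2) : ℝ) * x₁ ^ (n + 1 - a) * (1 + x₂ ^ 2) ^ (-(a : ℝ) / 2))).const_sub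
      (((n - 1).choose (a - 1) : ℝ) * x₁ ^ (n - a) *
        (1 + x₂ ^ 2) ^ (((2 : ℝ) - (a : ℝ)) / 2))).const_mul (1 / (a : ℝ))
    refine h3.congr_deriv ?_
    ring

/-- Euler–Lagrange-type identity for the weighted-volume density: for `1 ≤ a ≤ n`,
`n ≥ 2`, and any three-times differentiable positive `u : ℝ → ℝ`,
`∂q/∂x₁(u,u',u'') − d/dz[∂q/∂x₂(u,u',u'')] + d²/dz²[∂q/∂x₃(u,u',u'')]
  = C(n−1,a) u^{n−a−1} (1+u'²)^{−a/2} − C(n−1,a−1) u^{n−a} u'' (1+u'²)^{−(a+2)/2}`. -/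
theorem stmt_11 (n a : ℕ) (hn : 2 ≤ n) (ha1 : 1 ≤ a) (han : a ≤ n)
    (u : ℝ → ℝ) (hu1 : Differentiable ℝ u) (hu2 : Differentiable ℝ (deriv u))
    (hu3 : Differentiable ℝ (deriv (deriv u))) (hupos : ∀ z : ℝ, 0 < u z) (z : ℝ) :
    deriv (fun t : ℝ => qdens n a t (deriv u z) (deriv (deriv u) z)) (u z)
      - deriv (fun w : ℝ =>
          deriv (fun t : ℝ => qdens n a (u w) t (deriv (deriv u) w)) (deriv u w)) z
      + deriv (deriv (fun w : ℝ =>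
          deriv (fun t : ℝ => qdens n a (u w) (deriv u w) t) (deriv (deriv u) w))) z
    = ((n - 1).choose a : ℝ) * u z ^ (n - a - 1) * (1 + deriv u z ^ 2) ^ (-(a : ℝ) / 2)
      - ((n - 1).choose (a - 1) : ℝ) * u z ^ (n - a) * deriv (deriv u) z *
          (1 + deriv u z ^ 2) ^ (-((a : ℝ) + 2) / 2) := by
  have hα : (a : ℝ) ≠ 0 := Nat.cast_ne_zero.mpr (by omega)
  have hU : ∀ w : ℝ, HasDerivAt u (deriv u w) w := fun w => (hu1 w).hasDerivAt
  have hp : ∀ w : ℝ, HasDerivAt (deriv u) (deriv (deriv u) w) w := fun w => (hu2 w).hasDerivAt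
  have hq : ∀ w : ℝ, HasDerivAt (deriv (deriv u)) (deriv (deriv (deriv u)) w) w :=
    fun w => (hu3 w).hasDerivAt
  have hX : ∀ (c : ℝ) (w : ℝ), HasDerivAt (fun y : ℝ => (1 + deriv u y ^ 2) ^ c)
      (((2 : ℕ) * deriv u w ^ 1 * deriv (deriv u) w) * c * (1 + deriv u w ^ 2) ^ (c - 1)) w :=
    fun c w => (((hp w).pow 2).const_add 1).rpow_const (Or.inl (by simp only [Pi.pow_apply]; positivity))
  -- first term
  rw [(qd1 n a (u z) (deriv u z) (deriv (deriv u) z)).deriv]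
  -- second term
  have h2fun : (fun w : ℝ =>
      deriv (fun t : ℝ => qdens n a (u w) t (deriv (deriv u) w)) (deriv u w))
      = fun w : ℝ => (1 / (a : ℝ)) *
        (((n - 1).choose (a - 1) : ℝ) * ((2 : ℝ) - (a : ℝ)) *
            (u w ^ (n - a) * deriv u w * (1 + deriv u w ^ 2) ^ (-(a : ℝ) / 2))
          + (a : ℝ) * (if a = 1 then (0:ℝ) else ((n - 1).choose (a - 2) : ℝ)) *
              (u w ^ (n + 1 - a) * deriv u w * deriv (deriv u) w *
                (1 + deriv u w ^ 2) ^ (-((a : ℝ) + 2) / 2))) :=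
    funext fun w => (qd2 n a (u w) (deriv u w) (deriv (deriv u) w)).deriv
  rw [h2fun]
  have hG : HasDerivAt (fun w : ℝ => (1 / (a : ℝ)) *
        (((n - 1).choose (a - 1) : ℝ) * ((2 : ℝ) - (a : ℝ)) *
            (u w ^ (n - a) * deriv u w * (1 + deriv u w ^ 2) ^ (-(a : ℝ) / 2))
          + (a : ℝ) * (if a = 1 then (0:ℝ) else ((n - 1).choose (a - 2) : ℝ)) *
              (u w ^ (n + 1 - a) * deriv u w * deriv (deriv u) w *
                (1 + deriv u w ^ 2) ^ (-((a : ℝ) + 2) / 2))))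
      ((1 / (a : ℝ)) *
        (((n - 1).choose (a - 1) : ℝ) * ((2 : ℝ) - (a : ℝ)) *
            (((n - a : ℕ) : ℝ) * u z ^ (n - a - 1) * deriv u z ^ 2 *
                (1 + deriv u z ^ 2) ^ (-(a : ℝ) / 2)
              + u z ^ (n - a) * deriv (deriv u) z * (1 + deriv u z ^ 2) ^ (-(a : ℝ) / 2)
              - (a : ℝ) * u z ^ (n - a) * deriv u z ^ 2 * deriv (deriv u) z *
                  (1 + deriv u z ^ 2) ^ (-((a : ℝ) + 2) / 2))
          + (a : ℝ) * (if a = 1 then (0:ℝ) else ((n - 1).choose (a - 2) : ℝ)) *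
              (((n + 1 - a : ℕ) : ℝ) * u z ^ (n + 1 - a - 1) * deriv u z ^ 2 *
                  deriv (deriv u) z * (1 + deriv u z ^ 2) ^ (-((a : ℝ) + 2) / 2)
                + u z ^ (n + 1 - a) * deriv (deriv u) z ^ 2 *
                    (1 + deriv u z ^ 2) ^ (-((a : ℝ) + 2) / 2)
                + u z ^ (n + 1 - a) * deriv u z * deriv (deriv (deriv u)) z *
                    (1 + deriv u z ^ 2) ^ (-((a : ℝ) + 2) / 2)
                - ((a : ℝ) + 2) * u z ^ (n + 1 - a) * deriv u z ^ 2 *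
                    deriv (deriv u) z ^ 2 * (1 + deriv u z ^ 2) ^ (-((a : ℝ) + 4) / 2)))) z := by
    have c1 := ((((hU z).pow (n - a)).mul (hp z)).mul (hX (-(a : ℝ) / 2) z)).const_mul
      (((n - 1).choose (a - 1) : ℝ) * ((2 : ℝ) - (a : ℝ)))
    have c2 := (((((hU z).pow (n + 1 - a)).mul (hp z)).mul (hq z)).mul
      (hX (-((a : ℝ) + 2) / 2) z)).const_mul
      ((a : ℝ) * (if a = 1 then (0:ℝ) else ((n - 1).choose (a - 2) : ℝ)))
    have h3 := (c1.add c2).const_mul (1 / (a : ℝ))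
    refine h3.congr_deriv ?_
    rw [show -(a : ℝ) / 2 - 1 = -((a : ℝ) + 2) / 2 from by ring,
      show -((a : ℝ) + 2) / 2 - 1 = -((a : ℝ) + 4) / 2 from by ring]
    simp only [Pi.pow_apply, Pi.mul_apply]
    ring
  rw [hG.deriv]
  -- third term
  have h3fun : (fun w : ℝ =>
      deriv (fun t : ℝ => qdens n a (u w) (deriv u w) t) (deriv (deriv u) w))
      = fun w : ℝ => -((1 / (a : ℝ)) *
          (if a = 1 then (0:ℝ) else ((n - 1).choose (a - 2) : ℝ)) *
          (u w ^ (n + 1 - a) * (1 + deriv u w ^ 2) ^ (-(a : ℝ) / 2))) :=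
    funext fun w => (qd3 n a (u w) (deriv u w) (deriv (deriv u) w)).deriv
  rw [h3fun]
  have hH : ∀ w : ℝ, HasDerivAt (fun w : ℝ => -((1 / (a : ℝ)) *
        (if a = 1 then (0:ℝ) else ((n - 1).choose (a - 2) : ℝ)) *
        (u w ^ (n + 1 - a) * (1 + deriv u w ^ 2) ^ (-(a : ℝ) / 2))))
      (-((1 / (a : ℝ)) * (if a = 1 then (0:ℝ) else ((n - 1).choose (a - 2) : ℝ)) *
        (((n + 1 - a : ℕ) : ℝ) * u w ^ (n + 1 - a - 1) * deriv u w *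
            (1 + deriv u w ^ 2) ^ (-(a : ℝ) / 2)
          - (a : ℝ) * (u w ^ (n + 1 - a) * deriv u w * deriv (deriv u) w *
              (1 + deriv u w ^ 2) ^ (-((a : ℝ) + 2) / 2))))) w := by
    intro w
    have h3 := ((((hU w).pow (n + 1 - a)).mul (hX (-(a : ℝ) / 2) w)).const_mul
      ((1 / (a : ℝ)) * (if a = 1 then (0:ℝ) else ((n - 1).choose (a - 2) : ℝ)))).neg
    refine h3.congr_deriv ?_
    rw [show -(a : ℝ) / 2 - 1 = -((a : ℝ) + 2) / 2 from by ring]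
    simp only [Pi.pow_apply, Pi.mul_apply]
    ring
  have hHd : deriv (fun w : ℝ => -((1 / (a : ℝ)) *
        (if a = 1 then (0:ℝ) else ((n - 1).choose (a - 2) : ℝ)) *
        (u w ^ (n + 1 - a) * (1 + deriv u w ^ 2) ^ (-(a : ℝ) / 2))))
      = fun w : ℝ => -((1 / (a : ℝ)) *
        (if a = 1 then (0:ℝ) else ((n - 1).choose (a - 2) : ℝ)) *
        (((n + 1 - a : ℕ) : ℝ) * u w ^ (n + 1 - a - 1) * deriv u w *
            (1 + deriv u w ^ 2) ^ (-(a : ℝ) / 2)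
          - (a : ℝ) * (u w ^ (n + 1 - a) * deriv u w * deriv (deriv u) w *
              (1 + deriv u w ^ 2) ^ (-((a : ℝ) + 2) / 2)))) :=
    funext fun w => (hH w).deriv
  rw [hHd]
  have hH1 : HasDerivAt (fun w : ℝ => -((1 / (a : ℝ)) *
        (if a = 1 then (0:ℝ) else ((n - 1).choose (a - 2) : ℝ)) *
        (((n + 1 - a : ℕ) : ℝ) * u w ^ (n + 1 - a - 1) * deriv u w *
            (1 + deriv u w ^ 2) ^ (-(a : ℝ) / 2)
          - (a : ℝ) * (u w ^ (n + 1 - a) * deriv u w * deriv (deriv u) w *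
              (1 + deriv u w ^ 2) ^ (-((a : ℝ) + 2) / 2)))))
      (-((1 / (a : ℝ)) * (if a = 1 then (0:ℝ) else ((n - 1).choose (a - 2) : ℝ)) *
        (((n + 1 - a : ℕ) : ℝ) * ((n + 1 - a - 1 : ℕ) : ℝ) * u z ^ (n + 1 - a - 1 - 1) *
              deriv u z ^ 2 * (1 + deriv u z ^ 2) ^ (-(a : ℝ) / 2)
          + ((n + 1 - a : ℕ) : ℝ) * u z ^ (n + 1 - a - 1) * deriv (deriv u) z *
              (1 + deriv u z ^ 2) ^ (-(a : ℝ) / 2)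
          - (a : ℝ) * ((n + 1 - a : ℕ) : ℝ) * u z ^ (n + 1 - a - 1) * deriv u z ^ 2 *
              deriv (deriv u) z * (1 + deriv u z ^ 2) ^ (-((a : ℝ) + 2) / 2)
          - (a : ℝ) * (((n + 1 - a : ℕ) : ℝ) * u z ^ (n + 1 - a - 1) * deriv u z ^ 2 *
                deriv (deriv u) z * (1 + deriv u z ^ 2) ^ (-((a : ℝ) + 2) / 2)
              + u z ^ (n + 1 - a) * deriv (deriv u) z ^ 2 *
                  (1 + deriv u z ^ 2) ^ (-((a : ℝ) + 2) / 2)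
              + u z ^ (n + 1 - a) * deriv u z * deriv (deriv (deriv u)) z *
                  (1 + deriv u z ^ 2) ^ (-((a : ℝ) + 2) / 2)
              - ((a : ℝ) + 2) * u z ^ (n + 1 - a) * deriv u z ^ 2 * deriv (deriv u) z ^ 2 *
                  (1 + deriv u z ^ 2) ^ (-((a : ℝ) + 4) / 2))))) z := by
    have hT1 := ((((hU z).pow (n + 1 - a - 1)).const_mul ((n + 1 - a : ℕ) : ℝ)).mul
      (hp z)).mul (hX (-(a : ℝ) / 2) z)
    have hT2 := (((((hU z).pow (n + 1 - a)).mul (hp z)).mul (hq z)).mul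
      (hX (-((a : ℝ) + 2) / 2) z)).const_mul (a : ℝ)
    have h3 := ((hT1.sub hT2).const_mul
      ((1 / (a : ℝ)) * (if a = 1 then (0:ℝ) else ((n - 1).choose (a - 2) : ℝ)))).neg
    refine h3.congr_deriv ?_
    rw [show -(a : ℝ) / 2 - 1 = -((a : ℝ) + 2) / 2 from by ring,
      show -((a : ℝ) + 2) / 2 - 1 = -((a : ℝ) + 4) / 2 from by ring]
    simp only [Pi.pow_apply, Pi.mul_apply]
    ring
  rw [hH1.deriv]
  -- now pure algebra
  have hp2 : (0:ℝ) < 1 + deriv u z ^ 2 := by positivity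
  have e2 : (1 + deriv u z ^ 2) ^ (((2 : ℝ) - (a : ℝ)) / 2)
      = (1 + deriv u z ^ 2) ^ (-((a : ℝ) + 4) / 2) *
        ((1 + deriv u z ^ 2) * (1 + deriv u z ^ 2) * (1 + deriv u z ^ 2)) := by
    rw [show ((2 : ℝ) - (a : ℝ)) / 2 = -((a : ℝ) + 4) / 2 + 1 + 1 + 1 from by ring,
      Real.rpow_add hp2, Real.rpow_add hp2, Real.rpow_add hp2, Real.rpow_one]
    ring
  have e0 : (1 + deriv u z ^ 2) ^ (-(a : ℝ) / 2)
      = (1 + deriv u z ^ 2) ^ (-((a : ℝ) + 4) / 2) *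
        ((1 + deriv u z ^ 2) * (1 + deriv u z ^ 2)) := by
    rw [show -(a : ℝ) / 2 = -((a : ℝ) + 4) / 2 + 1 + 1 from by ring,
      Real.rpow_add hp2, Real.rpow_add hp2, Real.rpow_one]
    ring
  have em : (1 + deriv u z ^ 2) ^ (-((a : ℝ) + 2) / 2)
      = (1 + deriv u z ^ 2) ^ (-((a : ℝ) + 4) / 2) * (1 + deriv u z ^ 2) := by
    rw [show -((a : ℝ) + 2) / 2 = -((a : ℝ) + 4) / 2 + 1 from by ring,
      Real.rpow_add hp2, Real.rpow_one]
  rw [e2, e0, em]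
  rcases eq_or_lt_of_le han with hcase | hcase
  · -- a = n
    have hc3 : ((n - 1).choose a : ℝ) = 0 := by
      rw [Nat.choose_eq_zero_of_lt (by omega)]; norm_num
    have hc2 : (if a = 1 then (0:ℝ) else ((n - 1).choose (a - 2) : ℝ))
        = ((a : ℝ) - 1) * ((n - 1).choose (a - 1) : ℝ) := by
      rw [if_neg (by omega)]
      have h := Nat.choose_succ_right_eq (n - 1) (a - 2)
      rw [show a - 2 + 1 = a - 1 from by omega, show n - 1 - (a - 2) = 1 from by omega] at h
      have h' : ((n - 1).choose (a - 1) : ℝ) * ((a - 1 : ℕ) : ℝ)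
          = ((n - 1).choose (a - 2) : ℝ) * 1 := by exact_mod_cast h
      rw [Nat.cast_sub ha1] at h'
      push_cast at h'
      linarith
    rw [hc3, hc2]
    rw [show n + 1 - a - 1 - 1 = 0 from by omega, show n + 1 - a - 1 = 0 from by omega,
      show n + 1 - a = 1 from by omega, show n - a - 1 = 0 from by omega,
      show n - a = 0 from by omega]
    norm_num
    field_simp
    ring
  · -- a < n
    obtain ⟨m, hm⟩ : ∃ m, n - a - 1 = m := ⟨_, rfl⟩
    have hc3 : ((n - 1).choose a : ℝ)
        = ((m : ℝ) + 1) * ((n - 1).choose (a - 1) : ℝ) / (a : ℝ) := by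
      rw [eq_div_iff hα]
      have h := Nat.choose_succ_right_eq (n - 1) (a - 1)
      rw [show a - 1 + 1 = a from by omega, show n - 1 - (a - 1) = m + 1 from by omega] at h
      have h' : ((n - 1).choose a : ℝ) * (a : ℝ)
          = ((n - 1).choose (a - 1) : ℝ) * ((m : ℝ) + 1) := by exact_mod_cast h
      linarith
    have hc2 : (if a = 1 then (0:ℝ) else ((n - 1).choose (a - 2) : ℝ))
        = ((a : ℝ) - 1) * ((n - 1).choose (a - 1) : ℝ) / ((m : ℝ) + 2) := by
      have hd : (m : ℝ) + 2 ≠ 0 := by positivity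
      split_ifs with h1
      · rw [h1]; norm_num
      · rw [eq_div_iff hd]
        have h := Nat.choose_succ_right_eq (n - 1) (a - 2)
        rw [show a - 2 + 1 = a - 1 from by omega,
          show n - 1 - (a - 2) = m + 2 from by omega] at h
        have h' : ((n - 1).choose (a - 1) : ℝ) * ((a - 1 : ℕ) : ℝ)
            = ((n - 1).choose (a - 2) : ℝ) * ((m : ℝ) + 2) := by exact_mod_cast h
        rw [Nat.cast_sub ha1] at h'
        push_cast at h'
        linarith
    rw [hc3, hc2]
    rw [show n + 1 - a - 1 - 1 = m from by omega, show n + 1 - a - 1 = m + 1 from by omega,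
      show n + 1 - a = m + 2 from by omega, show n - a - 1 = m from by omega,
      show n - a = m + 1 from by omega]
    push_cast
    have hd : (m : ℝ) + 2 ≠ 0 := by positivity
    field_simp
    ring
end

section
/- For integers n, b with 0 ≤ b < n and n ≥ 2, define p(n,b) = n³ − (b+10)n² + 2(5b−1)n − 2b(3b−4). Then p(n,b) > 0 if and only if one of the following holds: (i) 0 ≤ b ≤ 3 and n ≥ 11; (ii) 4 ≤ b ≤ 5 and n ≥ 12; (iii) 6 ≤ b ≤ 8 and n ≥ b+7; (iv) b ≥ 9 and n ≥ b+6. -/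
/-- `p(n,b) < 0` whenever `b < n ≤ b + 5`. -/
lemma stmt_15_lemA (n b : ℤ) (h1 : b < n) (h2 : n ≤ b + 5) :
    n ^ 3 - (b + 10) * n ^ 2 + 2 * (5 * b - 1) * n - 2 * b * (3 * b - 4) < 0 := by
  obtain ⟨k, rfl⟩ : ∃ k, n = b + k := ⟨n - b, by ring⟩
  have hk1 : 1 ≤ k := by omega
  have hk5 : k ≤ 5 := by omega
  interval_cases k <;> nlinarith [sq_nonneg b, sq_nonneg (b - 3)]

/-- positivity for `b ≥ 9`, `n ≥ b + 6`. -/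
lemma stmt_15_lemB (n b : ℤ) (hb : 9 ≤ b) (h : b + 6 ≤ n) :
    0 < n ^ 3 - (b + 10) * n ^ 2 + 2 * (5 * b - 1) * n - 2 * b * (3 * b - 4) := by
  obtain ⟨k, rfl⟩ : ∃ k, n = b + k := ⟨n - b, by ring⟩
  have hk : 6 ≤ k := by omega
  nlinarith [mul_nonneg (sub_nonneg.2 hk) (sq_nonneg b), sq_nonneg b,
    mul_nonneg (sub_nonneg.2 hb) (by nlinarith [sq_nonneg (k - 3)] : (0:ℤ) ≤ 2*k^2 - 10*k + 6),
    mul_nonneg (sub_nonneg.2 hk) (by nlinarith : (0:ℤ) ≤ k^2 + 14*k - 8)]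

/-- positivity for small `b` at/above the threshold. -/
lemma stmt_15_lemC (n b : ℤ) (hb : 0 ≤ b) (hb8 : b ≤ 8)
    (h : (b ≤ 3 ∧ 11 ≤ n) ∨ (4 ≤ b ∧ b ≤ 5 ∧ 12 ≤ n) ∨ (6 ≤ b ∧ b + 7 ≤ n)) :
    0 < n ^ 3 - (b + 10) * n ^ 2 + 2 * (5 * b - 1) * n - 2 * b * (3 * b - 4) := by
  interval_cases b <;>
    [ (have : 11 ≤ n := by omega); (have : 11 ≤ n := by omega);
      (have : 11 ≤ n := by omega); (have : 11 ≤ n := by omega);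
      (have : 12 ≤ n := by omega); (have : 12 ≤ n := by omega);
      (have : 13 ≤ n := by omega); (have : 14 ≤ n := by omega);
      (have : 15 ≤ n := by omega)] <;>
    nlinarith [sq_nonneg n, sq_nonneg (n - 11),
      mul_nonneg (by omega : (0:ℤ) ≤ n - 11) (sq_nonneg n),
      mul_nonneg (by omega : (0:ℤ) ≤ n) (by omega : (0:ℤ) ≤ n)]

/-- Characterization of positivity of `p(n,b) = n³ − (b+10)n² + 2(5b−1)n − 2b(3b−4)`
for integers `0 ≤ b < n`, `n ≥ 2`. -/
theorem stmt_15 (n b : ℤ) (hb : 0 ≤ b) (hbn : b < n) (hn : 2 ≤ n) :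
    0 < n ^ 3 - (b + 10) * n ^ 2 + 2 * (5 * b - 1) * n - 2 * b * (3 * b - 4) ↔
      (b ≤ 3 ∧ 11 ≤ n) ∨ (4 ≤ b ∧ b ≤ 5 ∧ 12 ≤ n) ∨
      (6 ≤ b ∧ b ≤ 8 ∧ b + 7 ≤ n) ∨ (9 ≤ b ∧ b + 6 ≤ n) := by
  constructor
  · intro hp
    have h6 : b + 6 ≤ n := by
      by_contra h
      exact absurd hp (not_lt.2 (le_of_lt (stmt_15_lemA n b hbn (by omega))))
    rcases le_or_gt 9 b with h9 | h9
    · exact Or.inr (Or.inr (Or.inr ⟨h9, h6⟩))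
    rcases le_or_gt 6 b with h6b | h6b
    · refine Or.inr (Or.inr (Or.inl ⟨h6b, by omega, ?_⟩))
      by_contra h
      have hn6 : n = b + 6 := by omega
      subst hn6
      nlinarith
    rcases le_or_gt 4 b with h4b | h4b
    · refine Or.inr (Or.inl ⟨h4b, by omega, ?_⟩)
      by_contra h
      have hbu : b ≤ 5 := by omega
      interval_cases b <;> interval_cases n <;> norm_num at hp
    · refine Or.inl ⟨by omega, ?_⟩
      by_contra h
      interval_cases b <;> interval_cases n <;> norm_num at hp
  · rintro (⟨h1, h2⟩ | ⟨h1, h2, h3⟩ | ⟨h1, h2, h3⟩ | ⟨h1, h2⟩)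
    · exact stmt_15_lemC n b hb (by omega) (Or.inl ⟨h1, h2⟩)
    · exact stmt_15_lemC n b hb (by omega) (Or.inr (Or.inl ⟨h1, h2, h3⟩))
    · exact stmt_15_lemC n b hb h2 (Or.inr (Or.inr ⟨h1, h3⟩))
    · exact stmt_15_lemB n b h1 h2
end

section
/- For every integer b ≥ 2, the cubic polynomial x³ − (b+10)x² + 2(5b−1)x − 2b(3b−4) in the real variable x has exactly one real root, and this root is positive. -/
private lemma cubic_neg (B x : ℝ) (hB : 2 ≤ B) (hx : x ≤ (2*B+18)/3) :
    x ^ 3 - (B + 10) * x ^ 2 + 2 * (5 * B - 1) * x - 2 * B * (3 * B - 4) < 0 := by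
  rcases le_or_gt x 0 with h | h
  · nlinarith [sq_nonneg x, mul_nonneg (neg_nonneg.2 h) (sq_nonneg x), sq_nonneg B,
      mul_pos (by linarith : (0:ℝ) < B) (by linarith : (0:ℝ) < 3*B-4)]
  · nlinarith [mul_nonneg (mul_nonneg h.le h.le) (by linarith : (0:ℝ) ≤ (2*B+18)/3 - x),
      mul_nonneg h.le (by linarith : (0:ℝ) ≤ (2*B+18)/3 - x),
      sq_nonneg (x - 1), sq_nonneg (B - 2), mul_nonneg (by linarith : (0:ℝ) ≤ B - 2) h.le,
      mul_nonneg (mul_nonneg (by linarith : (0:ℝ) ≤ B-2) h.le) h.le,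
      sq_nonneg (x - B), mul_nonneg (by linarith : (0:ℝ) ≤ B-2) (sq_nonneg x)]

private lemma quad_pos (B x y : ℝ) (hB : 2 ≤ B) (hx : (2*B+18)/3 ≤ x)
    (hy : (2*B+18)/3 ≤ y) :
    0 < x^2 + x*y + y^2 - (B+10)*(x+y) + (10*B - 2) := by
  nlinarith [mul_nonneg (by linarith : (0:ℝ) ≤ x - (2*B+18)/3)
      (by linarith : (0:ℝ) ≤ y - (2*B+18)/3),
    sq_nonneg (x - y), sq_nonneg (x + y - (4*B+36)/3)]

/-- For every integer `b ≥ 2`, the cubic `x³ − (b+10)x² + 2(5b−1)x − 2b(3b−4)`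
has exactly one real root, and this root is positive. -/
theorem stmt_16 (b : ℤ) (hb : 2 ≤ b) :
    ∃ x : ℝ, 0 < x ∧
      x ^ 3 - ((b : ℝ) + 10) * x ^ 2 + 2 * (5 * (b : ℝ) - 1) * x - 2 * (b : ℝ) * (3 * (b : ℝ) - 4) = 0 ∧
      ∀ y : ℝ,
        y ^ 3 - ((b : ℝ) + 10) * y ^ 2 + 2 * (5 * (b : ℝ) - 1) * y - 2 * (b : ℝ) * (3 * (b : ℝ) - 4) = 0 →
        y = x := by
  set B : ℝ := (b : ℝ) with hBdef
  have hB : 2 ≤ B := by rw [hBdef]; exact_mod_cast hb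
  set f : ℝ → ℝ := fun x =>
    x ^ 3 - (B + 10) * x ^ 2 + 2 * (5 * B - 1) * x - 2 * B * (3 * B - 4) with hf
  -- existence of a root in [L, B+11]
  have hc : ContinuousOn f (Set.Icc ((2*B+18)/3) (B+11)) := by fun_prop
  have h1 : f ((2*B+18)/3) ≤ 0 := by
    have : f ((2*B+18)/3) = (-4*B^3 - 102*B^2 + 612*B - 4212)/27 := by simp only [hf]; ring
    rw [this]
    nlinarith [sq_nonneg (B-3), mul_nonneg (by linarith : (0:ℝ) ≤ B) (sq_nonneg B)]
  have h2 : (0:ℝ) ≤ f (B+11) := by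
    have : f (B+11) = 5*B^2 + 138*B + 99 := by simp only [hf]; ring
    rw [this]; nlinarith [sq_nonneg B]
  have hle : (2*B+18)/3 ≤ B+11 := by linarith
  obtain ⟨x, hx, hfx⟩ := intermediate_value_Icc hle hc ⟨h1, h2⟩
  refine ⟨x, by linarith [hx.1], hfx, ?_⟩
  intro y hy
  -- y must also lie in [L, ∞)
  have hyL : (2*B+18)/3 ≤ y := by
    by_contra hcon
    push_neg at hcon
    have := cubic_neg B y hB hcon.le
    linarith
  -- difference factorization
  by_contra hne
  have hQ := quad_pos B y x hB hyL hx.1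
  have hfact : f y - f x = (y - x) * (y^2 + y*x + x^2 - (B+10)*(y+x) + (10*B - 2)) := by
    simp only [hf]; ring
  have hfy : f y = 0 := hy
  rw [hfy, hfx, sub_self] at hfact
  have : y - x ≠ 0 := sub_ne_zero.2 hne
  have := mul_ne_zero this (ne_of_gt hQ)
  exact this hfact.symm
end

section
/- Let b be a real number with b ≥ 9 and define p(x) = x³ − (b+10)x² + 2(5b−1)x − 2b(3b−4). Then p(b+5) = −(b² − 6b + 135) < 0 and p(b+6) = 6(3b − 26) > 0. In particular, p has a root in the open interval (b+5, b+6). -/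
/-- For real `b ≥ 9` and `p(x) = x³ − (b+10)x² + 2(5b−1)x − 2b(3b−4)`, one has
`p(b+5) = −(b² − 6b + 135) < 0` and `p(b+6) = 6(3b − 26) > 0`; in particular `p`
has a root in `(b+5, b+6)`. -/
theorem stmt_17 (b : ℝ) (hb : 9 ≤ b) (p : ℝ → ℝ)
    (hp : ∀ x : ℝ, p x = x ^ 3 - (b + 10) * x ^ 2 + 2 * (5 * b - 1) * x - 2 * b * (3 * b - 4)) :
    (p (b + 5) = -(b ^ 2 - 6 * b + 135) ∧ p (b + 5) < 0) ∧
    (p (b + 6) = 6 * (3 * b - 26) ∧ 0 < p (b + 6)) ∧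
    ∃ x ∈ Set.Ioo (b + 5) (b + 6), p x = 0 := by
  have h5 : p (b + 5) = -(b ^ 2 - 6 * b + 135) := by rw [hp]; ring
  have h6 : p (b + 6) = 6 * (3 * b - 26) := by rw [hp]; ring
  have hneg : p (b + 5) < 0 := by rw [h5]; nlinarith
  have hpos : 0 < p (b + 6) := by rw [h6]; nlinarith
  refine ⟨⟨h5, hneg⟩, ⟨h6, hpos⟩, ?_⟩
  have hc : ContinuousOn p (Set.Icc (b + 5) (b + 6)) := by
    have : Continuous p := by
      have : p = fun x => x ^ 3 - (b + 10) * x ^ 2 + 2 * (5 * b - 1) * x - 2 * b * (3 * b - 4) :=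
        funext hp
      rw [this]; continuity
    exact this.continuousOn
  have hle : b + 5 ≤ b + 6 := by linarith
  have h0 : (0 : ℝ) ∈ Set.Ioo (p (b + 5)) (p (b + 6)) := ⟨hneg, hpos⟩
  obtain ⟨x, hx, hxe⟩ := intermediate_value_Ioo hle hc h0
  exact ⟨x, hx, hxe⟩
end

section
/- Let b be a real number with b ≥ 2. Set D = 2b⁵ + 40b⁴ − 288b³ + 1733b² − 2540b − 36 and A = b³ + 66b² − 249b + 1090 + 9√D. Then D > 0, A > 0, and the number γ(b) = (1/3)·(b + 10 + (b² − 10b + 106)/A^{1/3} + A^{1/3}) satisfies γ(b)³ − (b+10)·γ(b)² + 2(5b−1)·γ(b) − 2b(3b−4) = 0. -/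
/-- Cardano-type formula for the real root of the stability cubic: for real `b ≥ 2`,
with `D = 2b⁵ + 40b⁴ − 288b³ + 1733b² − 2540b − 36` and
`A = b³ + 66b² − 249b + 1090 + 9√D`, one has `D > 0`, `A > 0`, and
`γ(b) = (1/3)(b + 10 + (b² − 10b + 106)/A^{1/3} + A^{1/3})` is a root of
`x³ − (b+10)x² + 2(5b−1)x − 2b(3b−4)`. -/
theorem stmt_18 (b : ℝ) (hb : 2 ≤ b) (D A γ : ℝ)
    (hD : D = 2 * b ^ 5 + 40 * b ^ 4 - 288 * b ^ 3 + 1733 * b ^ 2 - 2540 * b - 36)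
    (hA : A = b ^ 3 + 66 * b ^ 2 - 249 * b + 1090 + 9 * Real.sqrt D)
    (hγ : γ = (1 / 3) * (b + 10 + (b ^ 2 - 10 * b + 106) / A ^ ((1 : ℝ) / 3) + A ^ ((1 : ℝ) / 3))) :
    0 < D ∧ 0 < A ∧
      γ ^ 3 - (b + 10) * γ ^ 2 + 2 * (5 * b - 1) * γ - 2 * b * (3 * b - 4) = 0 := by
  have hb2 : 0 ≤ b - 2 := by linarith
  have hD0 : 0 < D := by
    have h3 : 0 ≤ (b - 2) ^ 3 := pow_nonneg hb2 3
    have h4 : 0 ≤ (b - 2) ^ 4 := pow_nonneg hb2 4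
    have h5 : 0 ≤ (b - 2) ^ 5 := pow_nonneg hb2 5
    have h2 : 0 ≤ (b - 2) ^ 2 := sq_nonneg _
    nlinarith [h3, h4, h5, h2]
  have hs0 : 0 ≤ Real.sqrt D := Real.sqrt_nonneg D
  have hM : 0 < b ^ 3 + 66 * b ^ 2 - 249 * b + 1090 := by
    nlinarith [pow_nonneg hb2 3, sq_nonneg (b - 2)]
  have hA0 : 0 < A := by rw [hA]; linarith
  set t := A ^ ((1 : ℝ) / 3) with htdef
  have ht0 : 0 < t := Real.rpow_pos_of_pos hA0 _
  have ht3 : t ^ 3 = A := by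
    rw [htdef, ← Real.rpow_natCast (A ^ ((1:ℝ)/3)) 3, ← Real.rpow_mul hA0.le]
    norm_num
  have hsq : Real.sqrt D ^ 2 = D := Real.sq_sqrt hD0.le
  refine ⟨hD0, hA0, ?_⟩
  have key : γ ^ 3 - (b + 10) * γ ^ 2 + 2 * (5 * b - 1) * γ - 2 * b * (3 * b - 4)
      = ((t ^ 3) ^ 2 + (b ^ 2 - 10 * b + 106) ^ 3
          - 2 * (b ^ 3 + 66 * b ^ 2 - 249 * b + 1090) * t ^ 3) / (27 * t ^ 3) := by
    rw [hγ]
    field_simp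
    ring
  rw [key, ht3, hA]
  have hnum : (b ^ 3 + 66 * b ^ 2 - 249 * b + 1090 + 9 * Real.sqrt D) ^ 2
      + (b ^ 2 - 10 * b + 106) ^ 3
      - 2 * (b ^ 3 + 66 * b ^ 2 - 249 * b + 1090)
        * (b ^ 3 + 66 * b ^ 2 - 249 * b + 1090 + 9 * Real.sqrt D) = 0 := by
    have : Real.sqrt D ^ 2 = D := hsq
    nlinarith [this, hD]
  rw [hnum, zero_div]
end
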